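/- Let q be an odd prime power and H the three-dimensional Paley matrix on PG(1,q). Then the two 2-dimensional layers of H obtained by fixing the third coordinate to 0 and to ∞ are orthogonal: ∑_{x,y ∈ PG(1,q)} H(x,y,0)·H(x,y,∞) = 0. -/
import Mathlib


open Finset

/-- The quadratic character on a field: `χ(a) = 1` if `a` is a (nonzero) square
and `χ(a) = -1` if `a` is a non-square. (Its value at `0` is irrelevant below:
it is only ever applied to nonzero field elements.) -/
noncomputable def chi {F : Type*} [Field F] (a : F) : ℤ := by
  classical exact if IsSquare a then 1 else -1

/-- The three-dimensional Paley matrix on the projective line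
`PG(1,q) = {∞} ∪ 𝔽_q`, modelled as `Option F` with `none = ∞`:
`H(x,y,z) = -1` if `x = y = z`; `H(x,y,z) = 1` if exactly two of `x,y,z` are
equal; and for pairwise distinct coordinates `H(∞,y,z) = χ(z-y)`,
`H(x,∞,z) = χ(x-z)`, `H(x,y,∞) = χ(y-x)`, and
`H(x,y,z) = χ((x-y)(y-z)(z-x))` when `x,y,z ∈ 𝔽_q`. -/
noncomputable def paleyH {F : Type*} [Field F] [DecidableEq F] :
    Option F → Option F → Option F → ℤ := fun x y z =>
  if x = y ∧ y = z then -1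
  else if x = y ∨ y = z ∨ z = x then 1
  else match x, y, z with
    | none, some b, some c => chi (c - b)
    | some a, none, some c => chi (a - c)
    | some a, some b, none => chi (b - a)
    | some a, some b, some c => chi ((a - b) * (b - c) * (c - a))
    | _, _, _ => 1

section Aux
variable {F : Type*} [Field F] [Fintype F] [DecidableEq F]

lemma chi_eq_quad (a : F) (ha : a ≠ 0) : chi a = quadraticChar F a := by
  simp [chi, quadraticChar_apply, quadraticCharFun, ha]

lemma char_ne_two (hq : Odd (Fintype.card F)) : ringChar F ≠ 2 := by
  intro h
  have := FiniteField.even_card_of_char_two h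
  rw [Nat.odd_iff] at hq
  omega

lemma sum_quad_mul (hq : Odd (Fintype.card F)) (c : F) :
    ∑ b : F, quadraticChar F (c * b) = 0 := by
  simp_rw [map_mul]
  rw [← Finset.mul_sum, quadraticChar_sum_zero (char_ne_two hq), mul_zero]

lemma e1 : paleyH (none : Option F) none (some 0) * paleyH (none : Option F) none none = -1 := by
  simp [paleyH]

lemma e2 (b : F) : paleyH none (some b) (some 0) * paleyH none (some b) none =
    if b = 0 then 1 else chi (-b) := by
  by_cases hb : b = 0 <;> simp [paleyH, hb]

lemma e3 (a : F) : paleyH (some a) none (some 0) * paleyH (some a) none none =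
    if a = 0 then 1 else chi a := by
  by_cases ha : a = 0
  · simp [paleyH, ha]
  · simp [paleyH, ha, Ne.symm ha]

lemma e4 (hq : Odd (Fintype.card F)) (a b : F) :
    paleyH (some a) (some b) (some 0) * paleyH (some a) (some b) none =
    if a = b then (if a = 0 then -1 else 1)
    else if b = 0 then chi (-a)
    else if a = 0 then chi b
    else quadraticChar F (a * b) := by
  by_cases hab : a = b
  · subst hab
    by_cases ha : a = 0 <;> simp [paleyH, ha]
  · by_cases hb : b = 0
    · subst hb; simp [paleyH, hab]
    · by_cases ha : a = 0
      · subst ha; simp [paleyH, hab, hb, Ne.symm hab]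
      · have hba : b - a ≠ 0 := sub_ne_zero.mpr fun h => hab h.symm
        have h1 : (a - b) * (b - 0) * (0 - a) ≠ 0 := by
          simp only [sub_zero, zero_sub]
          exact mul_ne_zero (mul_ne_zero (sub_ne_zero.mpr hab) hb) (neg_ne_zero.mpr ha)
        simp only [paleyH, hab, hb, ha, Option.some.injEq, if_neg, reduceCtorEq,
          and_false, false_and, or_self, or_false, false_or, if_false]
        rw [if_neg (fun h : (0:F) = a => ha h.symm)]
        rw [chi_eq_quad _ h1, chi_eq_quad _ hba, ← map_mul]
        have : (a - b) * (b - 0) * (0 - a) * (b - a) = a * b * (b - a) ^ 2 := by ring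
        rw [this, map_mul, quadraticChar_sq_one' hba, mul_one]

end Aux

/-- The two 2-dimensional layers of the three-dimensional Paley matrix obtained by
fixing the third coordinate to `0` and to `∞` are orthogonal:
`∑_{x,y ∈ PG(1,q)} H(x,y,0)·H(x,y,∞) = 0`. -/
theorem paleyH_layers_zero_infty_orthogonal {F : Type*} [Field F] [Fintype F]
    [DecidableEq F] (hq : Odd (Fintype.card F)) :
    ∑ x : Option F, ∑ y : Option F,
      paleyH x y (some (0 : F)) * paleyH x y none = 0 := by
  have hne2 := char_ne_two hq
  have hsum0 : ∑ b : F, quadraticChar F b = 0 := quadraticChar_sum_zero hne2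
  -- generic: sum over F of (if b = 0 then t else quadraticChar F (c * b)) = t
  have key : ∀ (t : ℤ) (c : F), c ≠ 0 →
      (∑ b : F, if b = 0 then t else quadraticChar F (c * b)) = t := by
    intro t c hc
    have : ∀ b : F, (if b = 0 then t else quadraticChar F (c * b))
        = quadraticChar F (c * b) + (if b = 0 then t else 0) := by
      intro b
      by_cases hb : b = 0 <;> simp [hb]
    simp_rw [this]
    rw [Finset.sum_add_distrib, sum_quad_mul hq c, Finset.sum_ite_eq' Finset.univ (0 : F)]
    simp
  rw [Fintype.sum_option]
  rw [Fintype.sum_option]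
  simp_rw [Fintype.sum_option]
  rw [e1]
  have h2 : ∑ b : F, paleyH none (some b) (some 0) * paleyH none (some b) none = 1 := by
    simp_rw [e2]
    have : ∀ b : F, (if b = 0 then (1:ℤ) else chi (-b))
        = if b = 0 then 1 else quadraticChar F ((-1) * b) := by
      intro b
      by_cases hb : b = 0
      · simp [hb]
      · simp [hb, chi_eq_quad (-b) (neg_ne_zero.mpr hb)]
    simp_rw [this]
    exact key 1 (-1) (by norm_num)
  have h3 : ∀ a : F, paleyH (some a) none (some 0) * paleyH (some a) none none
      = if a = 0 then 1 else quadraticChar F (1 * a) := by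
    intro a; rw [e3]
    by_cases ha : a = 0
    · simp [ha]
    · simp [ha, chi_eq_quad a ha]
  have h4 : ∀ a : F, ∑ b : F, paleyH (some a) (some b) (some 0) * paleyH (some a) (some b) none
      = if a = 0 then -1 else quadraticChar F ((-1) * a) := by
    intro a
    simp_rw [e4 hq]
    by_cases ha : a = 0
    · subst ha
      have h0 : ∀ b : F, (if (0:F) = b then (if (0:F) = 0 then (-1:ℤ) else 1)
          else if b = 0 then chi (-(0:F)) else if (0:F) = 0 then chi b
            else quadraticChar F (0 * b))
          = if b = 0 then -1 else quadraticChar F (1 * b) := by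
        intro b
        by_cases hb : b = 0
        · subst hb; norm_num
        · simp [hb, Ne.symm hb, eq_comm, chi_eq_quad b hb]
      rw [Finset.sum_congr rfl fun b _ => h0 b, key (-1) 1 one_ne_zero]
      simp
    · have hsplit : ∀ b : F, (if a = b then (if a = 0 then (-1:ℤ) else 1)
          else if b = 0 then chi (-a) else if a = 0 then chi b else quadraticChar F (a * b))
          = (if b = 0 then chi (-a) else quadraticChar F (a * b))
            + (if b = a then 1 - quadraticChar F (a * a) else 0) := by
        intro b
        by_cases hb : b = a
        · subst hb
          simp [ha]
        · have hab' : a ≠ b := fun h => hb h.symm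
          by_cases hb0 : b = 0
          · subst hb0
            simp [ha, hb, hab']
          · simp [hab', hb, hb0, ha]
      simp_rw [hsplit]
      rw [Finset.sum_add_distrib, Finset.sum_ite_eq' Finset.univ (a : F), if_pos (mem_univ a)]
      have hkey := key (chi (-a)) a ha
      rw [hkey]
      have haa : quadraticChar F (a * a) = 1 := by
        rw [← sq]; exact quadraticChar_sq_one' ha
      rw [haa, chi_eq_quad (-a) (neg_ne_zero.mpr ha), if_neg ha]
      have hneg : (-a : F) = (-1) * a := by ring
      rw [hneg]; ring
  simp_rw [h3, h4]
  rw [h2]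
  rw [Finset.sum_add_distrib, key 1 1 one_ne_zero, key (-1) (-1) (by norm_num)]
  ring
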